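/- Let Λ ⊂ ℝ² be a unimodular lattice and suppose A ∈ Λ attains the minimal ℓ² norm among nonzero points. Then there exists t₀ ∈ ℝ and a nonzero B ∈ Λ, not parallel to A, with ‖g_{t₀}A‖₂ = ‖g_{t₀}B‖₂ = min over nonzero P ∈ Λ of ‖g_{t₀}P‖₂, and this common value is at least 1. Consequently sup_t min over nonzero P of ‖g_t P‖₂ ≥ 1 for every unimodular lattice Λ, with equality for Λ = ℤ². -/

import Mathlib

/-- The lattice `ℤu + ℤv ⊂ ℝ²`. -/
def lat (u v : ℝ × ℝ) : Set (ℝ × ℝ) := {p | ∃ m n : ℤ, p = m • u + n • v}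

/-- The ℓ² norm of `g_t p` where `g_t = diag(eᵗ, e⁻ᵗ)`. -/
noncomputable def l2normAt (t : ℝ) (p : ℝ × ℝ) : ℝ :=
  Real.sqrt ((Real.exp t * p.1) ^ 2 + (Real.exp (-t) * p.2) ^ 2)

/-- The ℓ² systole of the lattice `g_t (ℤu + ℤv)`. -/
noncomputable def l2sys (u v : ℝ × ℝ) (t : ℝ) : ℝ :=
  sInf {r : ℝ | ∃ p ∈ lat u v, p ≠ 0 ∧ r = l2normAt t p}


lemma l2_nonneg (t : ℝ) (p : ℝ × ℝ) : 0 ≤ l2normAt t p := Real.sqrt_nonneg _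

lemma l2_sq (t : ℝ) (p : ℝ × ℝ) :
    l2normAt t p ^ 2 = (Real.exp t * p.1) ^ 2 + (Real.exp (-t) * p.2) ^ 2 := by
  rw [l2normAt, Real.sq_sqrt]; positivity

lemma l2_pos (t : ℝ) {p : ℝ × ℝ} (hp : p ≠ 0) : 0 < l2normAt t p := by
  have h1 : p.1 ≠ 0 ∨ p.2 ≠ 0 := by
    by_contra h; push_neg at h
    exact hp (Prod.ext h.1 h.2)
  apply Real.sqrt_pos.2
  have e1 := Real.exp_pos t
  have e2 := Real.exp_pos (-t)
  rcases h1 with h | h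
  · have : (Real.exp t * p.1) ^ 2 > 0 := by positivity
    nlinarith [sq_nonneg (Real.exp (-t) * p.2)]
  · have : (Real.exp (-t) * p.2) ^ 2 > 0 := by positivity
    nlinarith [sq_nonneg (Real.exp t * p.1)]

lemma l2_smul (t : ℝ) (c : ℝ) (p : ℝ × ℝ) :
    l2normAt t (c • p) = |c| * l2normAt t p := by
  rw [l2normAt, l2normAt, Prod.smul_fst, Prod.smul_snd, smul_eq_mul, smul_eq_mul]
  rw [show (Real.exp t * (c * p.1)) ^ 2 + (Real.exp (-t) * (c * p.2)) ^ 2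
    = c ^ 2 * ((Real.exp t * p.1) ^ 2 + (Real.exp (-t) * p.2) ^ 2) by ring]
  rw [Real.sqrt_mul (sq_nonneg c), Real.sqrt_sq_eq_abs]

lemma l2_neg (t : ℝ) (p : ℝ × ℝ) : l2normAt t (-p) = l2normAt t p := by
  have := l2_smul t (-1) p
  simpa using this

/-- comparison between times -/
lemma l2_compare (t s : ℝ) (p : ℝ × ℝ) :
    l2normAt t p ≤ Real.exp |t - s| * l2normAt s p := by
  have h1 : Real.exp t * p.1 = Real.exp (t - s) * (Real.exp s * p.1) := by
    rw [← mul_assoc, ← Real.exp_add]; ring_nf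
  have h2 : Real.exp (-t) * p.2 = Real.exp (s - t) * (Real.exp (-s) * p.2) := by
    rw [← mul_assoc, ← Real.exp_add]; ring_nf
  have e1 : Real.exp (t - s) ≤ Real.exp |t - s| := Real.exp_le_exp.2 (le_abs_self _)
  have e2 : Real.exp (s - t) ≤ Real.exp |t - s| := by
    apply Real.exp_le_exp.2; rw [abs_sub_comm]; exact le_abs_self _
  have e0 : (0:ℝ) < Real.exp |t - s| := Real.exp_pos _
  rw [l2normAt, l2normAt, show Real.exp |t - s| * Real.sqrt ((Real.exp s * p.1) ^ 2 + (Real.exp (-s) * p.2) ^ 2)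
    = Real.sqrt (Real.exp |t-s| ^ 2 * ((Real.exp s * p.1) ^ 2 + (Real.exp (-s) * p.2) ^ 2)) by
      rw [Real.sqrt_mul (sq_nonneg _), Real.sqrt_sq_eq_abs, abs_of_pos e0]]
  apply Real.sqrt_le_sqrt
  rw [h1, h2]
  have a1 : (Real.exp (t-s))^2 ≤ (Real.exp |t-s|)^2 := by
    apply pow_le_pow_left₀ (le_of_lt (Real.exp_pos _)) e1
  have a2 : (Real.exp (s-t))^2 ≤ (Real.exp |t-s|)^2 := by
    apply pow_le_pow_left₀ (le_of_lt (Real.exp_pos _)) e2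
  nlinarith [sq_nonneg (Real.exp s * p.1), sq_nonneg (Real.exp (-s) * p.2)]

lemma l2_coord1 (t : ℝ) (p : ℝ × ℝ) : Real.exp t * |p.1| ≤ l2normAt t p := by
  rw [l2normAt]
  have : Real.exp t * |p.1| = Real.sqrt ((Real.exp t * p.1)^2) := by
    rw [Real.sqrt_sq_eq_abs, abs_mul, abs_of_pos (Real.exp_pos t)]
  rw [this]
  exact Real.sqrt_le_sqrt (by nlinarith [sq_nonneg (Real.exp (-t) * p.2)])

lemma l2_zero_coords (p : ℝ × ℝ) : |p.1| ≤ l2normAt 0 p ∧ |p.2| ≤ l2normAt 0 p := by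
  constructor
  · have := l2_coord1 0 p; simpa using this
  · rw [l2normAt]
    have : |p.2| = Real.sqrt ((Real.exp (-0:ℝ) * p.2)^2) := by
      rw [Real.sqrt_sq_eq_abs]; simp
    rw [this]
    exact Real.sqrt_le_sqrt (by nlinarith [sq_nonneg (Real.exp (0:ℝ) * p.1), Real.exp_zero])

lemma lat_mem_u (u v : ℝ × ℝ) : u ∈ lat u v := ⟨1, 0, by simp⟩

lemma lat_sub {u v p q : ℝ × ℝ} (hp : p ∈ lat u v) (hq : q ∈ lat u v) : p - q ∈ lat u v := by
  obtain ⟨m, n, rfl⟩ := hp; obtain ⟨m', n', rfl⟩ := hq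
  exact ⟨m - m', n - n', by push_cast [sub_smul]; module⟩

lemma lat_zsmul {u v p : ℝ × ℝ} (c : ℤ) (hp : p ∈ lat u v) : (c:ℝ) • p ∈ lat u v := by
  obtain ⟨m, n, rfl⟩ := hp
  refine ⟨c * m, c * n, ?_⟩
  push_cast
  rw [← Int.cast_smul_eq_zsmul ℝ m, ← Int.cast_smul_eq_zsmul ℝ n, ← Int.cast_smul_eq_zsmul ℝ (c*m), ← Int.cast_smul_eq_zsmul ℝ (c*n)]
  push_cast
  module

lemma lat_coords {u v p : ℝ × ℝ} (m n : ℤ) (hp : p = m • u + n • v) :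
    p.1 = m * u.1 + n * v.1 ∧ p.2 = m * u.2 + n * v.2 := by
  subst hp
  rw [← Int.cast_smul_eq_zsmul ℝ m, ← Int.cast_smul_eq_zsmul ℝ n]
  simp [Prod.smul_fst, Prod.smul_snd]

lemma lat_det {u v p q : ℝ × ℝ} (hp : p ∈ lat u v) (hq : q ∈ lat u v) :
    ∃ k : ℤ, p.1 * q.2 - p.2 * q.1 = k * (u.1 * v.2 - u.2 * v.1) := by
  obtain ⟨m, n, hp⟩ := hp; obtain ⟨m', n', hq⟩ := hq
  obtain ⟨h1, h2⟩ := lat_coords m n hp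
  obtain ⟨h3, h4⟩ := lat_coords m' n' hq
  exact ⟨m * n' - n * m', by rw [h1,h2,h3,h4]; push_cast; ring⟩

lemma lat_coeff_eq {u v : ℝ × ℝ} (huv : |u.1 * v.2 - u.2 * v.1| = 1)
    {p : ℝ × ℝ} (m n : ℤ) (hp : p = m • u + n • v) :
    |(m:ℝ)| = |p.1 * v.2 - p.2 * v.1| ∧ |(n:ℝ)| = |u.1 * p.2 - u.2 * p.1| := by
  obtain ⟨h1, h2⟩ := lat_coords m n hp
  constructor
  · rw [show p.1 * v.2 - p.2 * v.1 = (m:ℝ) * (u.1 * v.2 - u.2 * v.1) by rw [h1, h2]; ring,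
      abs_mul, huv, mul_one]
  · rw [show u.1 * p.2 - u.2 * p.1 = (n:ℝ) * (u.1 * v.2 - u.2 * v.1) by rw [h1, h2]; ring,
      abs_mul, huv, mul_one]

lemma lat_finite {u v : ℝ × ℝ} (huv : |u.1 * v.2 - u.2 * v.1| = 1) (t R : ℝ) :
    {p : ℝ × ℝ | p ∈ lat u v ∧ p ≠ 0 ∧ l2normAt t p ≤ R}.Finite := by
  set C : ℝ := Real.exp |t| * R * (|u.1| + |u.2| + |v.1| + |v.2| + 1) with hC
  set M : ℤ := ⌈C⌉ with hM
  apply Set.Finite.subset (Set.Finite.image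
    (f := fun mn : ℤ × ℤ => (mn.1 • u + mn.2 • v : ℝ × ℝ))
    (Set.finite_Icc (-M, -M) (M, M)))
  rintro p ⟨⟨m, n, hp⟩, -, hpR⟩
  refine ⟨(m, n), ?_, hp.symm⟩
  -- bound |p.1|, |p.2|
  have h0 : l2normAt 0 p ≤ Real.exp |t| * R := by
    have := l2_compare 0 t p
    rw [zero_sub, abs_neg] at this
    refine this.trans ?_
    have := Real.exp_pos |t|
    nlinarith
  obtain ⟨hp1, hp2⟩ := l2_zero_coords p
  have hb1 : |p.1| ≤ Real.exp |t| * R := hp1.trans h0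
  have hb2 : |p.2| ≤ Real.exp |t| * R := hp2.trans h0
  have hRpos : 0 ≤ Real.exp |t| * R := le_trans (abs_nonneg _) hb1
  obtain ⟨hm, hn⟩ := lat_coeff_eq huv m n hp
  have hmC : |(m:ℝ)| ≤ C := by
    rw [hm, hC]
    calc |p.1 * v.2 - p.2 * v.1| ≤ |p.1| * |v.2| + |p.2| * |v.1| := by
          refine (abs_sub _ _).trans ?_
          rw [abs_mul, abs_mul]
      _ ≤ Real.exp |t| * R * (|u.1| + |u.2| + |v.1| + |v.2| + 1) := by
          nlinarith [abs_nonneg p.1, abs_nonneg p.2, abs_nonneg v.1, abs_nonneg v.2,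
            abs_nonneg u.1, abs_nonneg u.2]
  have hnC : |(n:ℝ)| ≤ C := by
    rw [hn, hC]
    calc |u.1 * p.2 - u.2 * p.1| ≤ |u.1| * |p.2| + |u.2| * |p.1| := by
          refine (abs_sub _ _).trans ?_
          rw [abs_mul, abs_mul]
      _ ≤ Real.exp |t| * R * (|u.1| + |u.2| + |v.1| + |v.2| + 1) := by
          nlinarith [abs_nonneg p.1, abs_nonneg p.2, abs_nonneg v.1, abs_nonneg v.2,
            abs_nonneg u.1, abs_nonneg u.2]
  have hCM : C ≤ (M:ℝ) := Int.le_ceil C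
  constructor
  · constructor
    · have : -(M:ℝ) ≤ (m:ℝ) := by
        have := (abs_le.1 (hmC.trans hCM)).1; linarith
      exact_mod_cast this
    · have : -(M:ℝ) ≤ (n:ℝ) := by
        have := (abs_le.1 (hnC.trans hCM)).1; linarith
      exact_mod_cast this
  · constructor
    · have : (m:ℝ) ≤ (M:ℝ) := (abs_le.1 (hmC.trans hCM)).2
      exact_mod_cast this
    · have : (n:ℝ) ≤ (M:ℝ) := (abs_le.1 (hnC.trans hCM)).2
      exact_mod_cast this

lemma u_ne_zero {u v : ℝ × ℝ} (huv : |u.1 * v.2 - u.2 * v.1| = 1) : u ≠ 0 := by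
  rintro rfl; simp at huv

lemma l2sys_min {u v : ℝ × ℝ} (huv : |u.1 * v.2 - u.2 * v.1| = 1) (t : ℝ) :
    ∃ w ∈ lat u v, w ≠ 0 ∧ l2normAt t w = l2sys u v t ∧
      ∀ p ∈ lat u v, p ≠ 0 → l2normAt t w ≤ l2normAt t p := by
  have hu0 := u_ne_zero huv
  set S := {p : ℝ × ℝ | p ∈ lat u v ∧ p ≠ 0 ∧ l2normAt t p ≤ l2normAt t u} with hS
  have hfin : S.Finite := lat_finite huv t _
  have hne : S.Nonempty := ⟨u, lat_mem_u u v, hu0, le_refl _⟩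
  obtain ⟨w, hwS, hwmin⟩ := Set.exists_min_image S (l2normAt t) hfin hne
  have hglobal : ∀ p ∈ lat u v, p ≠ 0 → l2normAt t w ≤ l2normAt t p := by
    intro p hp hp0
    by_cases hpS : p ∈ S
    · exact hwmin p hpS
    · have : ¬ l2normAt t p ≤ l2normAt t u := fun h => hpS ⟨hp, hp0, h⟩
      push_neg at this
      exact le_trans (hwmin u ⟨lat_mem_u u v, hu0, le_refl _⟩) this.le
  refine ⟨w, hwS.1, hwS.2.1, ?_, hglobal⟩
  have hL : IsLeast {r : ℝ | ∃ p ∈ lat u v, p ≠ 0 ∧ r = l2normAt t p} (l2normAt t w) := by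
    constructor
    · exact ⟨w, hwS.1, hwS.2.1, rfl⟩
    · rintro r ⟨p, hp, hp0, rfl⟩
      exact hglobal p hp hp0
  rw [l2sys]
  exact hL.csInf_eq.symm

/-- abstract Cauchy–Schwarz for 2x2 determinants -/
lemma abs_det_le (a b c d : ℝ) : |a * d - b * c| ≤ Real.sqrt (a^2 + b^2) * Real.sqrt (c^2 + d^2) := by
  rw [show |a * d - b * c| = Real.sqrt ((a*d - b*c)^2) from (Real.sqrt_sq_eq_abs _).symm,
    ← Real.sqrt_mul (by positivity)]
  apply Real.sqrt_le_sqrt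
  nlinarith [sq_nonneg (a*c + b*d)]

/-- flowed determinant equals determinant -/
lemma det_flow (t : ℝ) (p q : ℝ × ℝ) :
    Real.exp t * p.1 * (Real.exp (-t) * q.2) - Real.exp (-t) * p.2 * (Real.exp t * q.1)
      = p.1 * q.2 - p.2 * q.1 := by
  have hee : Real.exp t * Real.exp (-t) = 1 := by rw [← Real.exp_add]; simp
  linear_combination (p.1 * q.2 - p.2 * q.1) * hee

lemma det_le_norms (t : ℝ) (p q : ℝ × ℝ) :
    |p.1 * q.2 - p.2 * q.1| ≤ l2normAt t p * l2normAt t q := by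
  rw [← det_flow t p q, l2normAt, l2normAt]
  exact abs_det_le _ _ _ _

lemma det_ge_one {u v : ℝ × ℝ} (huv : |u.1 * v.2 - u.2 * v.1| = 1)
    {p q : ℝ × ℝ} (hp : p ∈ lat u v) (hq : q ∈ lat u v)
    (hd : p.1 * q.2 - p.2 * q.1 ≠ 0) : 1 ≤ |p.1 * q.2 - p.2 * q.1| := by
  obtain ⟨k, hk⟩ := lat_det hp hq
  rw [hk, abs_mul, huv, mul_one]
  rw [hk] at hd
  have hk0 : k ≠ 0 := by rintro rfl; simp at hd
  have h1 : (1:ℤ) ≤ |k| := Int.one_le_abs hk0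
  calc (1:ℝ) = ((1:ℤ):ℝ) := by norm_num
    _ ≤ ((|k|:ℤ):ℝ) := by exact_mod_cast h1
    _ = |(k:ℝ)| := by push_cast; ring

lemma min_coprime {u v : ℝ × ℝ} (huv : |u.1 * v.2 - u.2 * v.1| = 1) {t : ℝ} {w : ℝ × ℝ}
    (hw : w ∈ lat u v) (hw0 : w ≠ 0)
    (hmin : ∀ p ∈ lat u v, p ≠ 0 → l2normAt t w ≤ l2normAt t p) :
    ∃ a b : ℤ, w = a • u + b • v ∧ Int.gcd a b = 1 := by
  obtain ⟨a, b, hab⟩ := hw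
  refine ⟨a, b, hab, ?_⟩
  have hd0 : (Int.gcd a b : ℤ) ≠ 0 := by
    simp only [ne_eq, Int.natCast_eq_zero, Int.gcd_eq_zero_iff, not_and_or]
    by_contra hcon
    push_neg at hcon
    obtain ⟨rfl, rfl⟩ : a = 0 ∧ b = 0 := by
      constructor <;> omega
    apply hw0; rw [hab]; simp
  have hdpos : 0 < (Int.gcd a b : ℤ) := lt_of_le_of_ne (Int.natCast_nonneg _) (Ne.symm hd0)
  have hda : (Int.gcd a b : ℤ) ∣ a := Int.gcd_dvd_left a b
  have hdb : (Int.gcd a b : ℤ) ∣ b := Int.gcd_dvd_right a b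
  have hw'lat : (a / (Int.gcd a b : ℤ)) • u + (b / (Int.gcd a b : ℤ)) • v ∈ lat u v := ⟨_, _, rfl⟩
  set w' : ℝ × ℝ := (a / (Int.gcd a b : ℤ)) • u + (b / (Int.gcd a b : ℤ)) • v with hw'
  have h1 : (Int.gcd a b : ℤ) * (a / (Int.gcd a b : ℤ)) = a := Int.mul_ediv_cancel' hda
  have h2 : (Int.gcd a b : ℤ) * (b / (Int.gcd a b : ℤ)) = b := Int.mul_ediv_cancel' hdb
  have h1' : (a:ℝ) = ((Int.gcd a b : ℤ):ℝ) * (((a / (Int.gcd a b : ℤ)) : ℤ):ℝ) := by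
    exact_mod_cast congrArg (fun x : ℤ => (x:ℝ)) h1.symm
  have h2' : (b:ℝ) = ((Int.gcd a b : ℤ):ℝ) * (((b / (Int.gcd a b : ℤ)) : ℤ):ℝ) := by
    exact_mod_cast congrArg (fun x : ℤ => (x:ℝ)) h2.symm
  have hwd : w = ((Int.gcd a b : ℤ) : ℝ) • w' := by
    obtain ⟨c1, c2⟩ := lat_coords _ _ hw'
    obtain ⟨e1, e2⟩ := lat_coords a b hab
    apply Prod.ext
    · simp only [Prod.smul_fst, smul_eq_mul, e1, c1]
      linear_combination u.1 * h1' + v.1 * h2'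
    · simp only [Prod.smul_snd, smul_eq_mul, e2, c2]
      linear_combination u.2 * h1' + v.2 * h2'
  have hw'0 : w' ≠ 0 := by
    rintro h; apply hw0; rw [hwd, h]; simp
  have hnorm : l2normAt t w = ((Int.gcd a b : ℤ) : ℝ) * l2normAt t w' := by
    rw [hwd, l2_smul, abs_of_pos (by exact_mod_cast hdpos)]
  have hmle := hmin w' hw'lat hw'0
  have hw'pos := l2_pos t hw'0
  have hle1 : ((Int.gcd a b : ℤ) : ℝ) ≤ 1 := by
    rw [hnorm] at hmle; nlinarith
  have : (Int.gcd a b : ℤ) ≤ 1 := by exact_mod_cast hle1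
  have : (Int.gcd a b : ℤ) = 1 := le_antisymm this hdpos
  exact_mod_cast this

/-- pure arithmetic core of the Hermite bound -/
lemma key_bound (W1 W2 Z1 Z2 c s n : ℝ)
    (hdet : (W1 * Z2 - W2 * Z1) ^ 2 = 1)
    (hs2 : s ^ 2 = W1 ^ 2 + W2 ^ 2) (hspos : 0 < s)
    (hinner : |W1 * (Z1 - c * W1) + W2 * (Z2 - c * W2)| ≤ s ^ 2 / 2)
    (hn2 : n ^ 2 = (Z1 - c * W1) ^ 2 + (Z2 - c * W2) ^ 2)
    (hn : s ≤ n) : s ≤ 2 := by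
  have lag : s ^ 2 * n ^ 2
      = (W1 * (Z2 - c * W2) - W2 * (Z1 - c * W1)) ^ 2
        + (W1 * (Z1 - c * W1) + W2 * (Z2 - c * W2)) ^ 2 := by
    rw [hs2, hn2]; ring
  have hdc : (W1 * (Z2 - c * W2) - W2 * (Z1 - c * W1)) ^ 2 = 1 := by
    rw [show W1 * (Z2 - c * W2) - W2 * (Z1 - c * W1) = W1 * Z2 - W2 * Z1 by ring, hdet]
  rw [hdc] at lag
  have habs := abs_le.1 hinner
  have h4 : s ^ 2 * s ^ 2 ≤ 1 + s ^ 2 / 2 * (s ^ 2 / 2) := by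
    have hnn : s ^ 2 ≤ n ^ 2 := by nlinarith
    have : s ^ 2 * s ^ 2 ≤ s ^ 2 * n ^ 2 :=
      mul_le_mul_of_nonneg_left hnn (sq_nonneg s)
    nlinarith [habs.1, habs.2]
  nlinarith [sq_nonneg (s - 2), sq_nonneg (s + 2), sq_nonneg (s ^ 2 - 4), hspos]

lemma l2sys_le_two {u v : ℝ × ℝ} (huv : |u.1 * v.2 - u.2 * v.1| = 1) (t : ℝ) :
    l2sys u v t ≤ 2 := by
  obtain ⟨w, hwlat, hw0, hwsys, hwmin⟩ := l2sys_min huv t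
  obtain ⟨a, b, hab, hgcd⟩ := min_coprime huv hwlat hw0 hwmin
  have hbez : a * Int.gcdA a b - b * (-(Int.gcdB a b)) = 1 := by
    have h := Int.gcd_eq_gcd_ab a b
    rw [hgcd] at h; push_cast at h; linarith
  have hzlat : ((-(Int.gcdB a b)) • u + (Int.gcdA a b) • v : ℝ × ℝ) ∈ lat u v := ⟨_, _, rfl⟩
  set z : ℝ × ℝ := (-(Int.gcdB a b)) • u + (Int.gcdA a b) • v with hz
  have hdetwz : w.1 * z.2 - w.2 * z.1 = u.1 * v.2 - u.2 * v.1 := by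
    obtain ⟨e1, e2⟩ := lat_coords a b hab
    obtain ⟨f1, f2⟩ := lat_coords _ _ hz
    rw [e1, e2, f1, f2]
    have hb : ((a * Int.gcdA a b - b * (-(Int.gcdB a b)) : ℤ) : ℝ) = 1 := by rw [hbez]; norm_num
    push_cast at hb ⊢
    linear_combination (u.1 * v.2 - u.2 * v.1) * hb
  have hdet2 : (w.1 * z.2 - w.2 * z.1) ^ 2 = 1 := by
    rw [hdetwz, ← sq_abs, huv]; norm_num
  have hspos : 0 < l2normAt t w := l2_pos t hw0
  have hs2 := l2_sq t w
  set X : ℝ := Real.exp t * w.1 * (Real.exp t * z.1) + Real.exp (-t) * w.2 * (Real.exp (-t) * z.2)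
    with hX
  set k : ℤ := round (X / l2normAt t w ^ 2) with hk
  have hr : |X / l2normAt t w ^ 2 - (k:ℝ)| ≤ 1/2 := abs_sub_round _
  have habsX : |X - (k:ℝ) * l2normAt t w ^ 2| ≤ l2normAt t w ^ 2 / 2 := by
    have e : X - (k:ℝ) * l2normAt t w ^ 2
        = l2normAt t w ^ 2 * (X / l2normAt t w ^ 2 - (k:ℝ)) := by
      field_simp
    rw [e, abs_mul, abs_of_pos (by positivity : (0:ℝ) < l2normAt t w ^ 2)]
    nlinarith [hr, sq_nonneg (l2normAt t w)]
  have hz'lat : z - ((k:ℝ) • w) ∈ lat u v := lat_sub hzlat (lat_zsmul k hwlat)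
  set z' : ℝ × ℝ := z - (k:ℝ) • w with hz'
  have hz'1 : z'.1 = z.1 - k * w.1 := by rw [hz']; simp
  have hz'2 : z'.2 = z.2 - k * w.2 := by rw [hz']; simp
  have hdet' : w.1 * z'.2 - w.2 * z'.1 = w.1 * z.2 - w.2 * z.1 := by
    rw [hz'1, hz'2]; ring
  have hz'0 : z' ≠ 0 := by
    intro h
    rw [h] at hdet'
    simp only [Prod.fst_zero, Prod.snd_zero, mul_zero, zero_mul, sub_zero, zero_sub] at hdet'
    nlinarith [hdet2, hdet'.symm]
  have hZ1' : Real.exp t * z'.1 = Real.exp t * z.1 - k * (Real.exp t * w.1) := by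
    rw [hz'1]; ring
  have hZ2' : Real.exp (-t) * z'.2 = Real.exp (-t) * z.2 - k * (Real.exp (-t) * w.2) := by
    rw [hz'2]; ring
  have hz'sq : l2normAt t z' ^ 2
      = (Real.exp t * z.1 - k * (Real.exp t * w.1)) ^ 2
        + (Real.exp (-t) * z.2 - k * (Real.exp (-t) * w.2)) ^ 2 := by
    rw [l2_sq, hZ1', hZ2']
  have hinner : |Real.exp t * w.1 * (Real.exp t * z.1 - (k:ℝ) * (Real.exp t * w.1))
      + Real.exp (-t) * w.2 * (Real.exp (-t) * z.2 - (k:ℝ) * (Real.exp (-t) * w.2))|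
      ≤ l2normAt t w ^ 2 / 2 := by
    have h1 : Real.exp t * w.1 * (Real.exp t * z.1 - (k:ℝ) * (Real.exp t * w.1))
        + Real.exp (-t) * w.2 * (Real.exp (-t) * z.2 - (k:ℝ) * (Real.exp (-t) * w.2))
        = X - (k:ℝ) * l2normAt t w ^ 2 := by
      rw [hX]; linear_combination (k:ℝ) * hs2
    rw [h1]; exact habsX
  have hdetflow : (Real.exp t * w.1 * (Real.exp (-t) * z'.2)
      - Real.exp (-t) * w.2 * (Real.exp t * z'.1)) ^ 2 = 1 := by
    rw [det_flow, hdet', hdet2]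
  have hdetflow' : (Real.exp t * w.1 * (Real.exp (-t) * z.2 - (k:ℝ) * (Real.exp (-t) * w.2))
      - Real.exp (-t) * w.2 * (Real.exp t * z.1 - (k:ℝ) * (Real.exp t * w.1))) ^ 2 = 1 := by
    rw [← hZ1', ← hZ2']; exact hdetflow
  have hfinal : l2normAt t w ≤ 2 := by
    apply key_bound (Real.exp t * w.1) (Real.exp (-t) * w.2) (Real.exp t * z.1)
      (Real.exp (-t) * z.2) (k:ℝ) (l2normAt t w) (l2normAt t z')
      _ hs2 hspos hinner hz'sq (hwmin z' hz'lat hz'0)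
    linear_combination hdetflow'
  rw [← hwsys]; exact hfinal
def sw (p : ℝ × ℝ) : ℝ × ℝ := (p.2, p.1)

lemma parallel_is_mul {u v : ℝ × ℝ} (huv : |u.1 * v.2 - u.2 * v.1| = 1)
    {A p : ℝ × ℝ} (a b : ℤ) (hA : A = a • u + b • v) (hgcd : Int.gcd a b = 1)
    (hp : p ∈ lat u v) (hpar : A.1 * p.2 - A.2 * p.1 = 0) :
    ∃ c : ℤ, p = (c:ℝ) • A := by
  obtain ⟨m, n, hmn⟩ := hp
  obtain ⟨e1, e2⟩ := lat_coords a b hA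
  obtain ⟨f1, f2⟩ := lat_coords m n hmn
  have hD : u.1 * v.2 - u.2 * v.1 ≠ 0 := by
    intro h; rw [h] at huv; simp at huv
  have hdet : ((a * n - b * m : ℤ) : ℝ) * (u.1 * v.2 - u.2 * v.1) = 0 := by
    rw [← hpar, e1, e2, f1, f2]; push_cast; ring
  have hint : a * n = b * m := by
    have h := (mul_eq_zero.1 hdet).resolve_right hD
    have h0 : a * n - b * m = 0 := by exact_mod_cast h
    omega
  have hbez : (1:ℤ) = a * Int.gcdA a b + b * Int.gcdB a b := by
    have := Int.gcd_eq_gcd_ab a b; rw [hgcd] at this; exact_mod_cast this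
  obtain ⟨c, hm, hn⟩ : ∃ c : ℤ, m = c * a ∧ n = c * b :=
    ⟨Int.gcdA a b * m + Int.gcdB a b * n,
      by linear_combination m * hbez - Int.gcdB a b * hint,
      by linear_combination n * hbez + Int.gcdA a b * hint⟩
  have hmr : (m:ℝ) = (c:ℝ) * (a:ℝ) := by exact_mod_cast congrArg (fun x : ℤ => (x:ℝ)) hm
  have hnr : (n:ℝ) = (c:ℝ) * (b:ℝ) := by exact_mod_cast congrArg (fun x : ℤ => (x:ℝ)) hn
  refine ⟨c, Prod.ext ?_ ?_⟩
  · rw [f1, Prod.smul_fst, smul_eq_mul, e1]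
    linear_combination u.1 * hmr + v.1 * hnr
  · rw [f2, Prod.smul_snd, smul_eq_mul, e2]
    linear_combination u.2 * hmr + v.2 * hnr


lemma sw_sw (p : ℝ × ℝ) : sw (sw p) = p := rfl

lemma sw_ne_zero {p : ℝ × ℝ} (hp : p ≠ 0) : sw p ≠ 0 := by
  intro h; apply hp
  have h1 : p.2 = 0 := congrArg Prod.fst h
  have h2 : p.1 = 0 := congrArg Prod.snd h
  exact Prod.ext h2 h1

lemma sw_lat {u v p : ℝ × ℝ} (hp : p ∈ lat u v) : sw p ∈ lat (sw u) (sw v) := by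
  obtain ⟨m, n, rfl⟩ := hp
  exact ⟨m, n, by apply Prod.ext <;> simp [sw, Prod.smul_fst, Prod.smul_snd]⟩

lemma sw_norm (t : ℝ) (p : ℝ × ℝ) : l2normAt t (sw p) = l2normAt (-t) p := by
  rw [l2normAt, l2normAt, neg_neg]
  rw [show (sw p).1 = p.2 from rfl, show (sw p).2 = p.1 from rfl, add_comm]

lemma sw_sys (u v : ℝ × ℝ) (t : ℝ) : l2sys (sw u) (sw v) t = l2sys u v (-t) := by
  rw [l2sys, l2sys]
  congr 1
  ext r
  constructor
  · rintro ⟨p, hp, hp0, rfl⟩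
    refine ⟨sw p, ?_, sw_ne_zero hp0, ?_⟩
    · have := sw_lat hp; rwa [sw_sw, sw_sw] at this
    · rw [sw_norm, neg_neg]
  · rintro ⟨p, hp, hp0, rfl⟩
    exact ⟨sw p, sw_lat hp, sw_ne_zero hp0, (sw_norm t p).symm⟩

/-- if p is a global minimizer at time t then its norm is the systole -/
lemma min_eq_sys {u v : ℝ × ℝ} (huv : |u.1 * v.2 - u.2 * v.1| = 1) {t : ℝ} {p : ℝ × ℝ}
    (hp : p ∈ lat u v) (hp0 : p ≠ 0)
    (hpmin : ∀ q ∈ lat u v, q ≠ 0 → l2normAt t p ≤ l2normAt t q) :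
    l2normAt t p = l2sys u v t := by
  obtain ⟨w, hw, hw0, hwsys, hwmin⟩ := l2sys_min huv t
  rw [← hwsys]
  exact le_antisymm (hpmin w hw hw0) (hwmin p hp hp0)

set_option maxHeartbeats 1000000 in
theorem main_case1 {u v A : ℝ × ℝ}
    (huv : |u.1 * v.2 - u.2 * v.1| = 1)
    (hA : A ∈ lat u v) (hA0 : A ≠ 0) (hA1 : A.1 ≠ 0)
    (hmin : ∀ p ∈ lat u v, p ≠ 0 → l2normAt 0 A ≤ l2normAt 0 p) :
    ∃ (t₀ : ℝ) (B : ℝ × ℝ), B ∈ lat u v ∧ B ≠ 0 ∧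
      A.1 * B.2 - A.2 * B.1 ≠ 0 ∧
      l2normAt t₀ A = l2normAt t₀ B ∧
      l2normAt t₀ A = l2sys u v t₀ ∧
      1 ≤ l2sys u v t₀ := by
  classical
  set T : Set ℝ := {t : ℝ | 0 ≤ t ∧
    ∀ s, 0 ≤ s → s ≤ t → ∀ q ∈ lat u v, q ≠ 0 → l2normAt s A ≤ l2normAt s q} with hT
  have h0T : (0:ℝ) ∈ T := by
    refine ⟨le_refl _, fun s hs hs0 q hq hq0 => ?_⟩
    have : s = 0 := le_antisymm hs0 hs
    subst this
    exact hmin q hq hq0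
  have hTne : T.Nonempty := ⟨0, h0T⟩
  have hbdd : BddAbove T := by
    refine ⟨Real.log (2 / |A.1|), fun t ht => ?_⟩
    have hAmin := fun q hq hq0 => ht.2 t ht.1 (le_refl t) q hq hq0
    have h1 : l2normAt t A = l2sys u v t := min_eq_sys huv hA hA0 hAmin
    have h2 : l2normAt t A ≤ 2 := h1 ▸ l2sys_le_two huv t
    have h3 : Real.exp t * |A.1| ≤ 2 := le_trans (l2_coord1 t A) h2
    have hA1p : 0 < |A.1| := abs_pos.2 hA1
    have h4 : Real.exp t ≤ 2 / |A.1| := by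
      rw [le_div_iff₀ hA1p]; exact h3
    exact (Real.le_log_iff_exp_le (by positivity)).2 h4
  set t₀ : ℝ := sSup T with ht₀
  have ht₀0 : 0 ≤ t₀ := le_csSup hbdd h0T
  have hT_lt : ∀ s, 0 ≤ s → s < t₀ → ∀ q ∈ lat u v, q ≠ 0 → l2normAt s A ≤ l2normAt s q := by
    intro s hs0 hst q hq hq0
    obtain ⟨t, htT, hst'⟩ := exists_lt_of_lt_csSup hTne hst
    exact htT.2 s hs0 hst'.le q hq hq0
  -- A is minimal at t₀
  have hmin_t₀ : ∀ q ∈ lat u v, q ≠ 0 → l2normAt t₀ A ≤ l2normAt t₀ q := by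
    intro q hq hq0
    rcases eq_or_lt_of_le ht₀0 with heq | hpos
    · rw [← heq]; exact hmin q hq hq0
    by_contra hcon
    push_neg at hcon
    have hqpos : 0 < l2normAt t₀ q := l2_pos t₀ hq0
    have hApos : 0 < l2normAt t₀ A := l2_pos t₀ hA0
    set r : ℝ := l2normAt t₀ A / l2normAt t₀ q with hr
    have hr1 : 1 < r := (one_lt_div hqpos).2 hcon
    have hlogr : 0 < Real.log r := Real.log_pos hr1
    set δ : ℝ := min t₀ (Real.log r / 4) with hδ
    have hδpos : 0 < δ := lt_min hpos (by positivity)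
    have hδt₀ : δ ≤ t₀ := min_le_left _ _
    have hs0 : 0 ≤ t₀ - δ := by linarith
    have hst : t₀ - δ < t₀ := by linarith
    have hAs := hT_lt (t₀ - δ) hs0 hst q hq hq0
    have c1 : l2normAt t₀ A ≤ Real.exp δ * l2normAt (t₀ - δ) A := by
      have := l2_compare t₀ (t₀ - δ) A
      rwa [show t₀ - (t₀ - δ) = δ by ring, abs_of_pos hδpos] at this
    have c2 : l2normAt (t₀ - δ) q ≤ Real.exp δ * l2normAt t₀ q := by
      have := l2_compare (t₀ - δ) t₀ q
      rwa [show t₀ - δ - t₀ = -δ by ring, abs_neg, abs_of_pos hδpos] at this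
    have hexp : Real.exp (2 * δ) < r := by
      have h2δ : 2 * δ < Real.log r := by
        have : δ ≤ Real.log r / 4 := min_le_right _ _
        linarith
      calc Real.exp (2 * δ) < Real.exp (Real.log r) := Real.exp_lt_exp.2 h2δ
        _ = r := Real.exp_log (by positivity)
    have hchain : l2normAt t₀ A ≤ Real.exp (2 * δ) * l2normAt t₀ q := by
      have e2 : Real.exp (2 * δ) = Real.exp δ * Real.exp δ := by
        rw [← Real.exp_add]; ring_nf
      have hexpδ : (0:ℝ) < Real.exp δ := Real.exp_pos δ
      calc l2normAt t₀ A ≤ Real.exp δ * l2normAt (t₀ - δ) A := c1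
        _ ≤ Real.exp δ * l2normAt (t₀ - δ) q := by nlinarith [hAs]
        _ ≤ Real.exp δ * (Real.exp δ * l2normAt t₀ q) := by nlinarith [c2]
        _ = Real.exp (2 * δ) * l2normAt t₀ q := by rw [e2]; ring
    have : l2normAt t₀ A < r * l2normAt t₀ q := by nlinarith [hchain, hexp, hqpos]
    rw [hr, div_mul_cancel₀ _ (ne_of_gt hqpos)] at this
    exact lt_irrefl _ this
  have hAsys : l2normAt t₀ A = l2sys u v t₀ := min_eq_sys huv hA hA0 hmin_t₀
  set m : ℝ := l2normAt t₀ A with hm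
  have hmpos : 0 < m := l2_pos t₀ hA0
  -- coprime representation of A
  obtain ⟨a, b, hab, hgcd⟩ := min_coprime huv hA hA0 hmin_t₀
  -- existence of a second non-parallel minimal vector
  have hB : ∃ B ∈ lat u v, B ≠ 0 ∧ A.1 * B.2 - A.2 * B.1 ≠ 0 ∧
      l2normAt t₀ B = m := by
    by_contra hno
    push_neg at hno
    -- every non-parallel vector is strictly longer at t₀
    have hstrict : ∀ q ∈ lat u v, q ≠ 0 → A.1 * q.2 - A.2 * q.1 ≠ 0 → m < l2normAt t₀ q := by
      intro q hq hq0 hqd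
      exact lt_of_le_of_ne (hmin_t₀ q hq hq0) (fun h => hno q hq hq0 hqd h.symm)
    -- the finite set of short vectors
    set F : Set (ℝ × ℝ) :=
      {p : ℝ × ℝ | p ∈ lat u v ∧ p ≠ 0 ∧ l2normAt t₀ p ≤ Real.exp 1 * (m + 1)} with hF
    have hFfin : F.Finite := lat_finite huv t₀ _
    have hA2lat : ((2:ℤ):ℝ) • A ∈ lat u v := lat_zsmul 2 hA
    have hA2norm : l2normAt t₀ (((2:ℤ):ℝ) • A) = 2 * m := by
      rw [l2_smul]; norm_num; exact hm.symm
    set G : Set (ℝ × ℝ) := (F \ {A, -A}) ∪ {((2:ℤ):ℝ) • A} with hG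
    have hGfin : G.Finite := Set.Finite.union hFfin.diff (Set.finite_singleton _)
    have hGne : G.Nonempty := ⟨((2:ℤ):ℝ) • A, Set.mem_union_right _ rfl⟩
    obtain ⟨p₀, hp₀G, hp₀min⟩ := Set.exists_min_image G (l2normAt t₀) hGfin hGne
    set μ : ℝ := l2normAt t₀ p₀ with hμ
    -- every element of G is strictly longer than m
    have hGlong : ∀ p ∈ G, m < l2normAt t₀ p := by
      rintro p (⟨⟨hpl, hp0, -⟩, hpd⟩ | hp2)
      · simp only [Set.mem_insert_iff, Set.mem_singleton_iff, not_or] at hpd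
        by_cases hdet : A.1 * p.2 - A.2 * p.1 = 0
        · obtain ⟨c, hc⟩ := parallel_is_mul huv a b hab hgcd hpl hdet
          have hc0 : c ≠ 0 := by
            rintro rfl; apply hp0; rw [hc]; simp
          have hc1 : c ≠ 1 := by
            rintro rfl; apply hpd.1; rw [hc]; simp
          have hcm1 : c ≠ -1 := by
            rintro rfl; apply hpd.2; rw [hc]; push_cast; simp
          have h2c : 2 ≤ c.natAbs := by omega
          have h2c' : (2:ℤ) ≤ |c| := by rw [Int.abs_eq_natAbs]; omega
          have h2cr : 2 ≤ |(c:ℝ)| := by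
            rw [← Int.cast_abs]; exact_mod_cast h2c'
          rw [hc, l2_smul]
          nlinarith
        · exact hstrict p hpl hp0 hdet
      · rw [Set.mem_singleton_iff] at hp2
        rw [hp2, hA2norm]; linarith
    have hμm : m < μ := hGlong p₀ hp₀G
    -- choose ε
    set c₀ : ℝ := min (μ / m) ((m + 1) / m) with hc₀
    have hc₀1 : 1 < c₀ := by
      apply lt_min
      · rw [lt_div_iff₀ hmpos]; linarith
      · rw [lt_div_iff₀ hmpos]; linarith
    have hlogc : 0 < Real.log c₀ := Real.log_pos hc₀1
    set ε : ℝ := min 1 (Real.log c₀ / 4) with hε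
    have hεpos : 0 < ε := lt_min one_pos (by positivity)
    have hε1 : ε ≤ 1 := min_le_left _ _
    have hexp2ε : Real.exp (2 * ε) < c₀ := by
      have : ε ≤ Real.log c₀ / 4 := min_le_right _ _
      calc Real.exp (2 * ε) < Real.exp (Real.log c₀) := Real.exp_lt_exp.2 (by linarith)
        _ = c₀ := Real.exp_log (by positivity)
    have hexpε_pos : (0:ℝ) < Real.exp ε := Real.exp_pos ε
    have hexpεsq : Real.exp ε * Real.exp ε = Real.exp (2 * ε) := by
      rw [← Real.exp_add]; ring_nf
    have hexpε1 : 1 ≤ Real.exp ε := Real.one_le_exp hεpos.le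
    -- key numeric bounds
    have hbound1 : Real.exp (2 * ε) * m < μ := by
      have : c₀ ≤ μ / m := min_le_left _ _
      have := hexp2ε.trans_le this
      calc Real.exp (2*ε) * m < (μ / m) * m := by nlinarith
        _ = μ := div_mul_cancel₀ _ (ne_of_gt hmpos)
    have hbound2 : Real.exp (2 * ε) * m < m + 1 := by
      have h1 : c₀ ≤ (m + 1) / m := min_le_right _ _
      have h2 := hexp2ε.trans_le h1
      calc Real.exp (2*ε) * m < ((m+1) / m) * m := by nlinarith
        _ = m + 1 := div_mul_cancel₀ _ (ne_of_gt hmpos)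
    have hboundε : Real.exp ε * m < m + 1 := by
      nlinarith [hexpε1, hexpεsq]
    -- claim: t₀ + ε ∈ T
    have hTε : t₀ + ε ∈ T := by
      refine ⟨by linarith, fun s hs0 hsε q hq hq0 => ?_⟩
      rcases le_or_gt s t₀ with hst | hst
      · rcases eq_or_lt_of_le hst with heq | hlt
        · rw [heq]; exact hmin_t₀ q hq hq0
        · exact hT_lt s hs0 hlt q hq hq0
      -- now t₀ < s ≤ t₀ + ε
      have hδpos : 0 < s - t₀ := by linarith
      have hδε : s - t₀ ≤ ε := by linarith
      have hexpδ : Real.exp (s - t₀) ≤ Real.exp ε := Real.exp_le_exp.2 hδε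
      have hexpδpos : (0:ℝ) < Real.exp (s - t₀) := Real.exp_pos _
      have bA : l2normAt s A ≤ Real.exp ε * m := by
        have := l2_compare s t₀ A
        rw [show s - t₀ = s - t₀ by ring, abs_of_pos hδpos] at this
        calc l2normAt s A ≤ Real.exp (s - t₀) * m := this
          _ ≤ Real.exp ε * m := by nlinarith
      have bq : l2normAt t₀ q ≤ Real.exp (s - t₀) * l2normAt s q := by
        have := l2_compare t₀ s q
        rwa [show t₀ - s = -(s - t₀) by ring, abs_neg, abs_of_pos hδpos] at this
      by_cases hqA : q = A
      · rw [hqA]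
      by_cases hqnA : q = -A
      · rw [hqnA, show -A = ((-1:ℤ):ℝ) • A by push_cast; simp, l2_smul]
        simp
      have hsqpos : 0 ≤ l2normAt s q := l2_nonneg s q
      by_cases hcase : l2normAt t₀ q ≤ Real.exp 1 * (m + 1)
      · -- q is in F, hence in G, hence long at t₀
        have hqG : q ∈ G := by
          rw [hG]
          apply Set.mem_union_left
          refine ⟨⟨hq, hq0, hcase⟩, ?_⟩
          simp only [Set.mem_insert_iff, Set.mem_singleton_iff, not_or]
          exact ⟨hqA, hqnA⟩
        have hqμ : μ ≤ l2normAt t₀ q := hp₀min q hqG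
        -- l2normAt s q ≥ μ / exp δ ≥ μ * exp(-ε) > exp ε * m ≥ l2normAt s A
        have h1 : μ ≤ Real.exp ε * l2normAt s q := by
          calc μ ≤ l2normAt t₀ q := hqμ
            _ ≤ Real.exp (s - t₀) * l2normAt s q := bq
            _ ≤ Real.exp ε * l2normAt s q := by nlinarith
        -- exp ε * m < μ / exp ε ≤ l2normAt s q
        have h2 : Real.exp ε * (Real.exp ε * m) < Real.exp ε * l2normAt s q := by
          calc Real.exp ε * (Real.exp ε * m) = Real.exp (2*ε) * m := by
                rw [← hexpεsq]; ring
            _ < μ := hbound1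
            _ ≤ Real.exp ε * l2normAt s q := h1
        have h3 : Real.exp ε * m < l2normAt s q :=
          lt_of_mul_lt_mul_left h2 hexpε_pos.le
        linarith [bA]
      · -- q is too long to matter
        push_neg at hcase
        have h1 : Real.exp 1 * (m + 1) < Real.exp (s - t₀) * l2normAt s q :=
          lt_of_lt_of_le hcase bq
        have hδ1 : Real.exp (s - t₀) ≤ Real.exp 1 := Real.exp_le_exp.2 (by linarith)
        have h2 : Real.exp 1 * (m + 1) < Real.exp 1 * l2normAt s q := by
          calc Real.exp 1 * (m+1) < Real.exp (s - t₀) * l2normAt s q := h1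
            _ ≤ Real.exp 1 * l2normAt s q := by nlinarith
        have h3 : m + 1 < l2normAt s q :=
          lt_of_mul_lt_mul_left h2 (Real.exp_pos 1).le
        have : l2normAt s A ≤ m + 1 := by nlinarith [bA, hboundε]
        linarith
    have := le_csSup hbdd hTε
    rw [← ht₀] at this
    linarith
  obtain ⟨B, hBlat, hB0, hBdet, hBnorm⟩ := hB
  refine ⟨t₀, B, hBlat, hB0, hBdet, hBnorm.symm, hAsys, ?_⟩
  -- 1 ≤ sys t₀
  have h1 : 1 ≤ |A.1 * B.2 - A.2 * B.1| := det_ge_one huv hA hBlat hBdet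
  have h2 : |A.1 * B.2 - A.2 * B.1| ≤ l2normAt t₀ A * l2normAt t₀ B := det_le_norms t₀ A B
  rw [hBnorm, ← hm] at h2
  have h3 : 1 ≤ m * m := le_trans h1 h2
  have h4 : 1 ≤ m := by nlinarith
  rw [← hAsys]; exact h4

theorem main_exists {u v A : ℝ × ℝ}
    (huv : |u.1 * v.2 - u.2 * v.1| = 1)
    (hA : A ∈ lat u v) (hA0 : A ≠ 0)
    (hmin : ∀ p ∈ lat u v, p ≠ 0 → l2normAt 0 A ≤ l2normAt 0 p) :
    ∃ (t₀ : ℝ) (B : ℝ × ℝ), B ∈ lat u v ∧ B ≠ 0 ∧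
      A.1 * B.2 - A.2 * B.1 ≠ 0 ∧
      l2normAt t₀ A = l2normAt t₀ B ∧
      l2normAt t₀ A = l2sys u v t₀ ∧
      1 ≤ l2sys u v t₀ := by
  by_cases hA1 : A.1 ≠ 0
  · exact main_case1 huv hA hA0 hA1 hmin
  push_neg at hA1
  have hA2 : A.2 ≠ 0 := by
    intro h; exact hA0 (Prod.ext hA1 h)
  -- apply to the swapped lattice
  have huv' : |(sw u).1 * (sw v).2 - (sw u).2 * (sw v).1| = 1 := by
    rw [show (sw u).1 = u.2 from rfl, show (sw u).2 = u.1 from rfl,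
      show (sw v).1 = v.2 from rfl, show (sw v).2 = v.1 from rfl, ← abs_neg]
    rw [show -(u.2 * v.1 - u.1 * v.2) = u.1 * v.2 - u.2 * v.1 by ring]
    exact huv
  have hmin' : ∀ p ∈ lat (sw u) (sw v), p ≠ 0 → l2normAt 0 (sw A) ≤ l2normAt 0 p := by
    intro p hp hp0
    have h1 : sw p ∈ lat u v := by
      have := sw_lat hp; rwa [sw_sw, sw_sw] at this
    have h2 := hmin (sw p) h1 (sw_ne_zero hp0)
    have h3 : l2normAt 0 (sw p) = l2normAt 0 p := by rw [sw_norm, neg_zero]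
    have h4 : l2normAt 0 (sw A) = l2normAt 0 A := by rw [sw_norm, neg_zero]
    rw [h4, ← h3]
    exact h2
  obtain ⟨t₀', B', hB'lat, hB'0, hB'det, hn1, hn2, hn3⟩ :=
    main_case1 huv' (sw_lat hA) (sw_ne_zero hA0) (by exact hA2) hmin'
  refine ⟨-t₀', sw B', ?_, sw_ne_zero hB'0, ?_, ?_, ?_, ?_⟩
  · have := sw_lat hB'lat; rwa [sw_sw, sw_sw] at this
  · rw [show (sw B').2 = B'.1 from rfl, show (sw B').1 = B'.2 from rfl]
    intro h
    apply hB'det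
    rw [show (sw A).1 = A.2 from rfl, show (sw A).2 = A.1 from rfl]
    linarith
  · have e1 : l2normAt (-t₀') A = l2normAt t₀' (sw A) := (sw_norm t₀' A).symm
    rw [e1, hn1, sw_norm, neg_neg]
  · rw [show l2normAt (-t₀') A = l2normAt t₀' (sw A) from (sw_norm t₀' A).symm, hn2,
      ← sw_sys u v t₀']
  · rw [← sw_sys u v t₀']; exact hn3

theorem part3 : (⨆ t : ℝ, l2sys ((1 : ℝ), (0 : ℝ)) ((0 : ℝ), (1 : ℝ)) t) = 1 := by
  have hdet : |((1:ℝ),(0:ℝ)).1 * ((0:ℝ),(1:ℝ)).2 - ((1:ℝ),(0:ℝ)).2 * ((0:ℝ),(1:ℝ)).1| = 1 := by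
    norm_num
  have hAlat : ((1:ℝ),(0:ℝ)) ∈ lat ((1:ℝ),(0:ℝ)) ((0:ℝ),(1:ℝ)) := ⟨1, 0, by simp⟩
  have hA0 : ((1:ℝ),(0:ℝ)) ≠ (0 : ℝ × ℝ) := by
    intro h; have := congrArg Prod.fst h; norm_num at this
  have hNA : l2normAt 0 ((1:ℝ),(0:ℝ)) = 1 := by
    rw [l2normAt]; norm_num
  have hmin : ∀ p ∈ lat ((1:ℝ),(0:ℝ)) ((0:ℝ),(1:ℝ)), p ≠ 0 →
      l2normAt 0 ((1:ℝ),(0:ℝ)) ≤ l2normAt 0 p := by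
    rintro p ⟨m, n, hp⟩ hp0
    obtain ⟨e1, e2⟩ := lat_coords m n hp
    simp only [Prod.fst, Prod.snd] at e1 e2
    have e1' : p.1 = (m:ℝ) := by rw [e1]; norm_num
    have e2' : p.2 = (n:ℝ) := by rw [e2]; norm_num
    have hmn : m ≠ 0 ∨ n ≠ 0 := by
      by_contra h; push_neg at h
      apply hp0
      apply Prod.ext <;> simp [e1', e2', h.1, h.2]
    have hge : (1:ℝ) ≤ p.1^2 + p.2^2 := by
      rw [e1', e2']
      have : (1:ℤ) ≤ m^2 + n^2 := by
        rcases hmn with h | h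
        · nlinarith [sq_nonneg n, Int.one_le_abs h, sq_abs m, sq_nonneg (|m| - 1)]
        · nlinarith [sq_nonneg m, Int.one_le_abs h, sq_abs n, sq_nonneg (|n| - 1)]
      exact_mod_cast this
    rw [hNA, l2normAt]
    rw [show (1:ℝ) = Real.sqrt 1 by simp]
    apply Real.sqrt_le_sqrt
    simpa using hge
  obtain ⟨t₀, B, _, _, _, _, _, hsys⟩ := main_exists hdet hAlat hA0 hmin
  have hbdd : BddAbove (Set.range fun t => l2sys ((1:ℝ),(0:ℝ)) ((0:ℝ),(1:ℝ)) t) := by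
    refine ⟨2, ?_⟩
    rintro r ⟨t, rfl⟩
    exact l2sys_le_two hdet t
  apply le_antisymm
  · apply Real.iSup_le _ (by norm_num)
    intro t
    -- systole at time t is at most min(e^t, e^{-t}) ≤ 1
    rcases le_or_gt 0 t with ht | ht
    · -- use (0,1)
      have hmem : ((0:ℝ),(1:ℝ)) ∈ lat ((1:ℝ),(0:ℝ)) ((0:ℝ),(1:ℝ)) := ⟨0, 1, by simp⟩
      have hne : ((0:ℝ),(1:ℝ)) ≠ (0 : ℝ × ℝ) := by
        intro h; have := congrArg Prod.snd h; norm_num at this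
      have hval : l2normAt t ((0:ℝ),(1:ℝ)) = Real.exp (-t) := by
        rw [l2normAt]
        norm_num
        rw [Real.sqrt_sq (Real.exp_pos _).le]
      have h1 : l2sys ((1:ℝ),(0:ℝ)) ((0:ℝ),(1:ℝ)) t ≤ Real.exp (-t) := by
        rw [l2sys]
        apply csInf_le
        · refine ⟨0, ?_⟩
          rintro r ⟨p, _, _, rfl⟩
          exact l2_nonneg t p
        · exact ⟨_, hmem, hne, hval.symm⟩
      have : Real.exp (-t) ≤ 1 := Real.exp_le_one_iff.2 (by linarith)
      linarith
    · -- use (1,0)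
      have hmem : ((1:ℝ),(0:ℝ)) ∈ lat ((1:ℝ),(0:ℝ)) ((0:ℝ),(1:ℝ)) := ⟨1, 0, by simp⟩
      have hval : l2normAt t ((1:ℝ),(0:ℝ)) = Real.exp t := by
        rw [l2normAt]
        norm_num
        rw [Real.sqrt_sq (Real.exp_pos _).le]
      have h1 : l2sys ((1:ℝ),(0:ℝ)) ((0:ℝ),(1:ℝ)) t ≤ Real.exp t := by
        rw [l2sys]
        apply csInf_le
        · refine ⟨0, ?_⟩
          rintro r ⟨p, _, _, rfl⟩
          exact l2_nonneg t p
        · exact ⟨_, hmem, hA0, hval.symm⟩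
      have : Real.exp t ≤ 1 := Real.exp_le_one_iff.2 ht.le
      linarith
  · exact le_ciSup_of_le hbdd t₀ hsys

/-- If `A` attains the minimal ℓ² norm among nonzero points of a unimodular
lattice, then at some time `t₀` the diagonal flow produces a second,
non-parallel minimal vector `B` with `‖g_{t₀}A‖₂ = ‖g_{t₀}B‖₂` equal to the
systole at `t₀`, and this common value is at least `1`. Consequently
`sup_t min_{0 ≠ P} ‖g_t P‖₂ ≥ 1`, with equality for `Λ = ℤ²`. -/
theorem l2_systole_sup_ge_one (u v A : ℝ × ℝ)
    (huv : |u.1 * v.2 - u.2 * v.1| = 1)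
    (hA : A ∈ lat u v) (hA0 : A ≠ 0)
    (hmin : ∀ p ∈ lat u v, p ≠ 0 → l2normAt 0 A ≤ l2normAt 0 p) :
    (∃ (t₀ : ℝ) (B : ℝ × ℝ), B ∈ lat u v ∧ B ≠ 0 ∧
      A.1 * B.2 - A.2 * B.1 ≠ 0 ∧
      l2normAt t₀ A = l2normAt t₀ B ∧
      l2normAt t₀ A = l2sys u v t₀ ∧
      1 ≤ l2sys u v t₀) ∧
    (1 ≤ ⨆ t : ℝ, l2sys u v t) ∧
    (⨆ t : ℝ, l2sys ((1 : ℝ), (0 : ℝ)) ((0 : ℝ), (1 : ℝ)) t) = 1 := by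
  obtain ⟨t₀, B, hBlat, hB0, hBdet, h1, h2, h3⟩ := main_exists huv hA hA0 hmin
  refine ⟨⟨t₀, B, hBlat, hB0, hBdet, h1, h2, h3⟩, ?_, part3⟩
  have hbdd : BddAbove (Set.range fun t => l2sys u v t) := by
    refine ⟨2, ?_⟩
    rintro r ⟨t, rfl⟩
    exact l2sys_le_two huv t
  exact le_ciSup_of_le hbdd t₀ h3
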